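/- Let K be a field containing F_q, A ∈ GL_n(K), and E ⊆ K_sep the field generated over K by the coordinates of all solutions of A X^{(q)} = X. Then E/K is a finite Galois extension. -/

import Mathlib

open Polynomial in
theorem fq_fix {F L : Type*} [Field F] [Fintype F] [Field L] [Algebra F L] {q : ℕ}
    (hq : q = Fintype.card F) : ∀ c : L, c ^ q = c → c ∈ Set.range (algebraMap F L) := by
  classical
  intro c hc
  subst hq
  set P : L[X] := X ^ Fintype.card F - X with hP
  have h1 : 1 < Fintype.card F := Fintype.one_lt_card
  have hPne : P ≠ 0 := FiniteField.X_pow_card_sub_X_ne_zero L h1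
  have hdeg : P.natDegree = Fintype.card F := FiniteField.X_pow_card_sub_X_natDegree_eq L h1
  set u : Finset L := Finset.univ.image (algebraMap F L) with hu
  have hucard : u.card = Fintype.card F := by
    rw [hu, Finset.card_image_of_injective _ (algebraMap F L).injective, Finset.card_univ]
  have husub : u ⊆ P.roots.toFinset := by
    intro x hx
    rw [Multiset.mem_toFinset, Polynomial.mem_roots hPne]
    obtain ⟨a, -, rfl⟩ := Finset.mem_image.mp hx
    simp [Polynomial.IsRoot, hP, ← map_pow, FiniteField.pow_card]
  have hcard : P.roots.toFinset.card ≤ u.card := by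
    rw [hucard]
    calc P.roots.toFinset.card ≤ Multiset.card P.roots := Multiset.toFinset_card_le _
      _ ≤ P.natDegree := Polynomial.card_roots' P
      _ = _ := hdeg
  have heq := Finset.eq_of_subset_of_card_le husub hcard
  have hcmem : c ∈ P.roots.toFinset := by
    rw [Multiset.mem_toFinset, Polynomial.mem_roots hPne]
    simp [Polynomial.IsRoot, hP, hc]
  rw [← heq] at hcmem
  obtain ⟨a, -, ha⟩ := Finset.mem_image.mp hcmem
  exact ⟨a, ha⟩

theorem lang_rel {F L : Type*} [Field F] [Field L] [Algebra F L] (p k : ℕ) [hp : Fact p.Prime]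
    [CharP L p] {q : ℕ} (hqpk : q = p ^ k)
    (hFfix : ∀ c : L, c ^ q = c → c ∈ Set.range (algebraMap F L))
    {n : ℕ} (A' : Matrix (Fin n) (Fin n) L) :
    ∀ s : Finset (Fin n → L),
      (∀ X ∈ s, A'.mulVec (fun i => X i ^ q) = X) →
      ∀ g : (Fin n → L) → L, (∑ X ∈ s, g X • X) = 0 → (∃ X ∈ s, g X ≠ 0) →
      ∃ c : (Fin n → L) → F, (∑ X ∈ s, algebraMap F L (c X) • X) = 0 ∧ ∃ X ∈ s, c X ≠ 0 := by
  classical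
  subst hqpk
  intro s
  induction s using Finset.strongInduction with
  | _ s ih =>
    rintro hs g hrel ⟨X₀, hX₀, hgX₀⟩
    set g' : (Fin n → L) → L := fun X => (g X₀)⁻¹ * g X with hg'
    have hg'X₀ : g' X₀ = 1 := inv_mul_cancel₀ hgX₀
    have hrel' : (∑ X ∈ s, g' X • X) = 0 := by
      have := congrArg (fun v => (g X₀)⁻¹ • v) hrel
      simpa [Finset.smul_sum, smul_smul, hg'] using this
    have hqrel : (∑ X ∈ s, (g' X ^ p ^ k) • X) = 0 := by
      have hY : (∑ X ∈ s, (g' X ^ p ^ k) • (fun i => X i ^ p ^ k)) = (0 : Fin n → L) := by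
        funext i
        have h0 : (∑ X ∈ s, g' X * X i) = 0 := by
          have := congrFun hrel' i
          simpa [Finset.sum_apply] using this
        have h1 := congrArg (· ^ p ^ k) h0
        simp only [sum_pow_char_pow, mul_pow] at h1
        simpa [Finset.sum_apply, zero_pow (pow_ne_zero k hp.out.ne_zero)] using h1
      calc ∑ X ∈ s, (g' X ^ p ^ k) • X
          = ∑ X ∈ s, (g' X ^ p ^ k) • (A'.mulVecLin fun i => X i ^ p ^ k) := by
            refine Finset.sum_congr rfl fun X hX => ?_
            rw [Matrix.mulVecLin_apply, hs X hX]
        _ = A'.mulVecLin (∑ X ∈ s, (g' X ^ p ^ k) • fun i => X i ^ p ^ k) := by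
            rw [map_sum]
            exact Finset.sum_congr rfl fun X _ => (map_smul _ _ _).symm
        _ = 0 := by rw [hY, map_zero]
    set h : (Fin n → L) → L := fun X => g' X ^ p ^ k - g' X with hh
    have hrelh : (∑ X ∈ s, h X • X) = 0 := by
      simp only [hh, sub_smul, Finset.sum_sub_distrib, hqrel, hrel', sub_zero]
    have hhX₀ : h X₀ = 0 := by simp [hh, hg'X₀]
    by_cases hall : ∀ X ∈ s, h X = 0
    · have hfix : ∀ X, ∃ cf : F, X ∈ s → algebraMap F L cf = g' X := by
        intro X
        by_cases hX : X ∈ s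
        · obtain ⟨a, ha⟩ := hFfix (g' X) (sub_eq_zero.mp (hall X hX))
          exact ⟨a, fun _ => ha⟩
        · exact ⟨0, fun hmem => absurd hmem hX⟩
      choose c hc using hfix
      refine ⟨c, ?_, X₀, hX₀, ?_⟩
      · rw [← hrel']
        exact Finset.sum_congr rfl fun X hX => by rw [hc X hX]
      · intro h0
        have := hc X₀ hX₀
        rw [h0, map_zero, hg'X₀] at this
        exact zero_ne_one this
    · push_neg at hall
      obtain ⟨X₁, hX₁, hhX₁⟩ := hall
      have hX₁ne : X₁ ≠ X₀ := fun e => hhX₁ (e ▸ hhX₀)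
      have hrel'' : (∑ X ∈ s.erase X₀, h X • X) = 0 := by
        rw [Finset.sum_erase s (by rw [hhX₀, zero_smul])]
        exact hrelh
      obtain ⟨c, hc0, X₂, hX₂, hcX₂⟩ := ih (s.erase X₀) (Finset.erase_ssubset hX₀)
        (fun X hX => hs X (Finset.mem_of_mem_erase hX)) h hrel''
        ⟨X₁, Finset.mem_erase.2 ⟨hX₁ne, hX₁⟩, hhX₁⟩
      refine ⟨fun X => if X = X₀ then 0 else c X, ?_, X₂, Finset.mem_of_mem_erase hX₂, ?_⟩
      · rw [← Finset.add_sum_erase s _ hX₀]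
        beta_reduce
        rw [if_pos rfl, map_zero, zero_smul, zero_add, ← hc0]
        exact Finset.sum_congr rfl fun X hX => by rw [if_neg (Finset.ne_of_mem_erase hX)]
      · beta_reduce
        rw [if_neg (Finset.ne_of_mem_erase hX₂)]
        exact hcX₂

open IntermediateField

/-- Let `K ⊇ F_q`, `A ∈ GL_n(K)`, and `E` the subfield of `K̄` generated over `K` by the
coordinates of all solutions of `A X^{(q)} = X`. Then `E/K` is a finite Galois extension. -/
theorem stmt_8 (F : Type*) [Field F] [Fintype F] (q : ℕ) (hq : q = Fintype.card F)
    (K : Type*) [Field K] [Algebra F K]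
    (n : ℕ) (A : Matrix (Fin n) (Fin n) K) (hA : IsUnit A)
    (E : IntermediateField K (AlgebraicClosure K))
    (hE : E = IntermediateField.adjoin K
      {x : AlgebraicClosure K | ∃ X : Fin n → AlgebraicClosure K,
        (A.map (algebraMap K (AlgebraicClosure K))).mulVec (fun i => X i ^ q) = X ∧
          ∃ i, X i = x}) :
    IsGalois K E ∧ FiniteDimensional K E := by
  classical
  subst hE
  set L := AlgebraicClosure K with hL
  set A' : Matrix (Fin n) (Fin n) L := A.map (algebraMap K L) with hA'
  set S : Set L := {x : L | ∃ X : Fin n → L,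
      A'.mulVec (fun i => X i ^ q) = X ∧ ∃ i, X i = x} with hS
  -- characteristic bookkeeping
  have hq2 : 1 < q := hq ▸ Fintype.one_lt_card
  set p := ringChar F with hp_def
  haveI : CharP F p := ringChar.charP F
  obtain ⟨k, hp_prime, hcard⟩ := FiniteField.card F p
  haveI : Fact p.Prime := ⟨hp_prime⟩
  have hqpk : q = p ^ (k : ℕ) := hq.trans hcard
  haveI : CharP K p := charP_of_injective_algebraMap (algebraMap F K).injective p
  haveI : CharP L p := charP_of_injective_algebraMap (algebraMap K L).injective p
  have hFfix : ∀ c : L, c ^ q = c → c ∈ Set.range (algebraMap F L) := fq_fix hq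
  -- the solution set
  set Sol : Set (Fin n → L) := {X | A'.mulVec (fun i => X i ^ q) = X} with hSol
  -- Sol is finite
  have hSolFin : Sol.Finite := by
    obtain ⟨b, hbSol, hspan, hbind⟩ := exists_linearIndependent F Sol
    have hbL : LinearIndependent L ((↑) : b → (Fin n → L)) := by
      by_contra hdep
      rw [show ((↑) : b → (Fin n → L)) = (id ∘ (↑)) from rfl] at hdep
      obtain ⟨f, hfsupp, hfsum, hfne⟩ : ∃ f ∈ Finsupp.supported L L b,
          ∑ i ∈ f.support, f i • id i = 0 ∧ f ≠ 0 := by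
        rw [linearIndependent_comp_subtype_iff, linearIndepOn_iff] at hdep
        push_neg at hdep
        obtain ⟨l, hl, h0, hne⟩ := hdep
        exact ⟨l, hl, by rwa [Finsupp.linearCombination_apply, Finsupp.sum] at h0, hne⟩
      obtain ⟨c, hcsum, X₂, hX₂, hcX₂⟩ := lang_rel p k hqpk hFfix A' f.support
        (fun X hX => hbSol ((Finsupp.mem_supported _ _).mp hfsupp hX)) f
        (by simpa using hfsum)
        (by
          obtain ⟨a, ha⟩ := Finsupp.support_nonempty_iff.mpr hfne
          exact ⟨a, ha, Finsupp.mem_support_iff.mp ha⟩)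
      -- contradict F-linear independence of b
      have hmemb : ∀ X ∈ f.support, X ∈ b :=
        fun X hX => (Finsupp.mem_supported _ _).mp hfsupp hX
      have := linearIndependent_iff'.mp hbind
        ((f.support.attach).map ⟨fun x => (⟨x.1, hmemb x.1 x.2⟩ : b),
          fun x y hxy => Subtype.ext (by simpa using congrArg Subtype.val hxy)⟩)
        (fun x => c x.1)
        (by
          rw [Finset.sum_map]
          show ∑ x ∈ f.support.attach, c x.1 • x.1 = 0
          rw [Finset.sum_attach f.support (fun X => c X • X)]
          rw [← hcsum]
          exact Finset.sum_congr rfl fun X _ => (algebraMap_smul L (c X) X).symm)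
        ⟨X₂, hmemb X₂ hX₂⟩
        (by
          rw [Finset.mem_map]
          exact ⟨⟨X₂, hX₂⟩, Finset.mem_attach _ _, rfl⟩)
      exact hcX₂ this
    have hbfin : b.Finite := LinearIndependent.setFinite (R := L) hbL
    haveI : FiniteDimensional F (Submodule.span F Sol) := by
      rw [← hspan]
      exact FiniteDimensional.span_of_finite F hbfin
    haveI : Finite (Submodule.span F Sol) := Module.finite_of_finite F
    exact Set.Finite.subset (Set.toFinite ((Submodule.span F Sol : Submodule F (Fin n → L)) : Set (Fin n → L))) Submodule.subset_span
  -- S is finite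
  have hSFin : S.Finite := by
    refine Set.Finite.subset (hSolFin.biUnion (fun X _ => Set.finite_range X)) ?_
    rintro x ⟨X, hX, i, rfl⟩
    exact Set.mem_biUnion hX ⟨i, rfl⟩
  haveI : Finite S := hSFin.to_subtype
  -- every element of S is separable over K
  have hsep : ∀ x ∈ S, IsSeparable K x := by
    rintro x ⟨X, hX, i, rfl⟩
    have hcoord : ∀ t, X t = ∑ l, A' t l * X l ^ q := by
      intro t
      conv_lhs => rw [← hX]
      simp [Matrix.mulVec, dotProduct]
    have hspanm : ∀ m : ℕ, ∀ j, X j ∈ Submodule.span K (Set.range fun t => X t ^ q ^ m) := by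
      intro m
      induction m with
      | zero =>
        intro j
        exact Submodule.subset_span ⟨j, by simp⟩
      | succ m ihm =>
        intro j
        refine Submodule.span_le.mpr ?_ (ihm j)
        rintro _ ⟨t, rfl⟩
        beta_reduce
        rw [SetLike.mem_coe]
        have hqm : q ^ m = p ^ ((k : ℕ) * m) := by rw [hqpk, ← pow_mul]
        have h1 : X t ^ q ^ m = ∑ l, algebraMap K L (A t l ^ q ^ m) * X l ^ q ^ (m + 1) := by
          conv_lhs => rw [hcoord t]
          rw [hqm, sum_pow_char_pow]
          refine Finset.sum_congr rfl fun l _ => ?_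
          rw [mul_pow, ← hqm, ← pow_mul, ← pow_succ']
          rw [hA', Matrix.map_apply, ← map_pow]
        rw [h1]
        refine Submodule.sum_mem _ fun l _ => ?_
        rw [← Algebra.smul_def]
        exact Submodule.smul_mem _ _ (Submodule.subset_span ⟨l, rfl⟩)
    haveI : IsPurelyInseparable (separableClosure K L) L :=
      separableClosure.isPurelyInseparable K L
    haveI : CharP (separableClosure K L) p :=
      charP_of_injective_algebraMap (algebraMap K (separableClosure K L)).injective p
    haveI : ExpChar (separableClosure K L) p := ExpChar.prime hp_prime
    have hpow : ∀ t : Fin n, ∃ e : ℕ, X t ^ p ^ e ∈ separableClosure K L := by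
      intro t
      obtain ⟨e, y, hy⟩ := IsPurelyInseparable.pow_mem (separableClosure K L) p (X t)
      exact ⟨e, hy ▸ y.2⟩
    choose e he using hpow
    set M : ℕ := Finset.univ.sup e with hM
    have hup : ∀ t, X t ^ q ^ M ∈ separableClosure K L := by
      intro t
      have h2 : e t ≤ M := Finset.le_sup (Finset.mem_univ t)
      have h3 : M ≤ (k : ℕ) * M := Nat.le_mul_of_pos_left M k.pos
      have h1 : q ^ M = p ^ (e t) * p ^ ((k : ℕ) * M - e t) := by
        rw [hqpk, ← pow_mul, ← pow_add]
        congr 1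
        omega
      rw [h1, pow_mul]
      exact pow_mem (he t) _
    have hmem := hspanm M i
    have hle : Submodule.span K (Set.range fun t => X t ^ q ^ M) ≤
        Subalgebra.toSubmodule (separableClosure K L).toSubalgebra := by
      rw [Submodule.span_le]
      rintro _ ⟨t, rfl⟩
      exact hup t
    exact (mem_separableClosure_iff).mp (hle hmem)
  haveI hsep' : Algebra.IsSeparable K (adjoin K S) :=
    (isSeparable_adjoin_iff_isSeparable K _).mpr hsep
  haveI hnorm : Normal K (adjoin K S) := by
    rw [normal_iff_forall_map_le (L := L)]
    intro σ
    rw [adjoin_map]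
    refine adjoin.mono K _ _ ?_
    rintro _ ⟨x, ⟨X, hX, i, rfl⟩, rfl⟩
    refine ⟨σ ∘ X, ?_, i, rfl⟩
    funext j
    have hXj := congrFun hX j
    simp only [Matrix.mulVec, dotProduct, Function.comp] at hXj ⊢
    calc ∑ l, A' j l * σ (X l) ^ q
        = σ (∑ l, A' j l * X l ^ q) := by
          rw [map_sum]
          refine Finset.sum_congr rfl fun l _ => ?_
          rw [map_mul, map_pow, hA', Matrix.map_apply, AlgHom.commutes]
      _ = σ (X j) := by rw [hXj]
  exact ⟨⟨⟩, IntermediateField.finiteDimensional_adjoin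
      (fun x _ => (Algebra.IsAlgebraic.isAlgebraic (R := K) x).isIntegral)⟩
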